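/- If A and B are crossing thin cuts with c(A) = m and c(B) = n, then after possibly replacing A by A* and/or B by B*, both corners A∩B* and A*∩B are thin cuts with capacities m and n respectively. -/

import Mathlib

open Set

variable {V : Type*}

def cobound (G : SimpleGraph V) (A : Set V) : Set (Sym2 V) :=
  {e | e ∈ G.edgeSet ∧ ∃ u v, e = s(u, v) ∧ u ∈ A ∧ v ∉ A}

def IsCut (G : SimpleGraph V) (A : Set V) : Prop := (cobound G A).Finite

noncomputable def cap (G : SimpleGraph V) (c : Sym2 V → ℕ) (A : Set V) : ℕ :=
  ∑ᶠ e ∈ cobound G A, c e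

structure IsRay (G : SimpleGraph V) (r : ℕ → V) : Prop where
  inj : Function.Injective r
  adj : ∀ n, G.Adj (r n) (r (n + 1))

def PtIn (G : SimpleGraph V) (A : Set V) :
    V ⊕ {r : ℕ → V // IsRay G r} → Prop
  | Sum.inl v => v ∈ A
  | Sum.inr r => ∃ N, ∀ n ≥ N, r.1 n ∈ A

def Separates (G : SimpleGraph V) (A : Set V)
    (u v : V ⊕ {r : ℕ → V // IsRay G r}) : Prop :=
  (PtIn G A u ∧ PtIn G Aᶜ v) ∨ (PtIn G Aᶜ u ∧ PtIn G A v)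

def ThinWrt (G : SimpleGraph V) (c : Sym2 V → ℕ) (A : Set V)
    (u v : V ⊕ {r : ℕ → V // IsRay G r}) : Prop :=
  IsCut G A ∧ Separates G A u v ∧
    ∀ B : Set V, IsCut G B → Separates G B u v → cap G c A ≤ cap G c B

/-- A cut is thin if it is thin with respect to some pair of vertices or ends. -/
def Thin (G : SimpleGraph V) (c : Sym2 V → ℕ) (A : Set V) : Prop :=
  ∃ u v, ThinWrt G c A u v

def Nested (A B : Set V) : Prop :=
  A ∩ B = ∅ ∨ A ∩ Bᶜ = ∅ ∨ Aᶜ ∩ B = ∅ ∨ Aᶜ ∩ Bᶜ = ∅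

-- helper lemmas

lemma cobound_compl (G : SimpleGraph V) (A : Set V) : cobound G Aᶜ = cobound G A := by
  ext e
  simp only [cobound, Set.mem_setOf_eq, Set.mem_compl_iff, not_not]
  constructor
  · rintro ⟨he, u, v, rfl, hu, hv⟩
    exact ⟨he, v, u, Sym2.eq_swap, hv, hu⟩
  · rintro ⟨he, u, v, rfl, hu, hv⟩
    exact ⟨he, v, u, Sym2.eq_swap, hv, hu⟩

lemma cap_compl (G : SimpleGraph V) (c : Sym2 V → ℕ) (A : Set V) :
    cap G c Aᶜ = cap G c A := by
  unfold cap; rw [cobound_compl]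

lemma IsCut_compl (G : SimpleGraph V) {A : Set V} (h : IsCut G A) : IsCut G Aᶜ := by
  unfold IsCut; rw [cobound_compl]; exact h

lemma cobound_corner_subset (G : SimpleGraph V) (A B : Set V) :
    cobound G (A ∩ Bᶜ) ⊆ cobound G A ∪ cobound G B := by
  rintro e ⟨he, u, v, rfl, ⟨huA, huB⟩, hv⟩
  by_cases hvA : v ∈ A
  · right
    have hvB : v ∈ B := by
      by_contra hvB
      exact hv ⟨hvA, hvB⟩
    exact ⟨he, v, u, Sym2.eq_swap, hvB, huB⟩
  · exact Or.inl ⟨he, u, v, rfl, huA, hvA⟩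

lemma cobound_corner_inter (G : SimpleGraph V) (A B : Set V) :
    cobound G (A ∩ Bᶜ) ∩ cobound G (Aᶜ ∩ B) ⊆ cobound G A ∩ cobound G B := by
  rintro e ⟨⟨he, u, v, rfl, ⟨huA, huB⟩, hv⟩, ⟨_, u', v', he', ⟨hu'A, hu'B⟩, hv'⟩⟩
  rcases Sym2.eq_iff.mp he' with ⟨h1, h2⟩ | ⟨h1, h2⟩
  · exact absurd huA (h1 ▸ hu'A)
  · have hvA : v ∈ Aᶜ := h2 ▸ hu'A
    have hvB : v ∈ B := h2 ▸ hu'B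
    exact ⟨⟨he, u, v, rfl, huA, hvA⟩, ⟨he, v, u, Sym2.eq_swap, hvB, huB⟩⟩

lemma cap_eq_sum (G : SimpleGraph V) (c : Sym2 V → ℕ) {A : Set V}
    (h : (cobound G A).Finite) : cap G c A = ∑ e ∈ h.toFinset, c e := by
  rw [cap, ← finsum_mem_coe_finset, h.coe_toFinset]

lemma submod (G : SimpleGraph V) (c : Sym2 V → ℕ) {A B : Set V}
    (hA : IsCut G A) (hB : IsCut G B) :
    cap G c (A ∩ Bᶜ) + cap G c (Aᶜ ∩ B) ≤ cap G c A + cap G c B := by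
  classical
  have hAB : (cobound G A ∪ cobound G B).Finite := hA.union hB
  have h1 : (cobound G (A ∩ Bᶜ)).Finite :=
    hAB.subset (cobound_corner_subset G A B)
  have h2 : (cobound G (Aᶜ ∩ B)).Finite := by
    have := cobound_corner_subset G Aᶜ Bᶜ
    rw [compl_compl, cobound_compl, cobound_compl G B] at this
    exact hAB.subset this
  rw [cap_eq_sum G c hA, cap_eq_sum G c hB, cap_eq_sum G c h1, cap_eq_sum G c h2]
  have e1 : ∑ e ∈ h1.toFinset, c e + ∑ e ∈ h2.toFinset, c e
      = ∑ e ∈ h1.toFinset ∪ h2.toFinset, c e + ∑ e ∈ h1.toFinset ∩ h2.toFinset, c e :=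
    Finset.sum_union_inter.symm
  have e2 : ∑ e ∈ hA.toFinset, c e + ∑ e ∈ hB.toFinset, c e
      = ∑ e ∈ hA.toFinset ∪ hB.toFinset, c e + ∑ e ∈ hA.toFinset ∩ hB.toFinset, c e :=
    Finset.sum_union_inter.symm
  rw [e1, e2]
  have hsub1 : h1.toFinset ∪ h2.toFinset ⊆ hA.toFinset ∪ hB.toFinset := by
    intro e he
    simp only [Finset.mem_union, Set.Finite.mem_toFinset,
      Set.Finite.mem_toFinset (hs := hA), Set.Finite.mem_toFinset (hs := hB)] at he ⊢
    rcases he with he | he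
    · simpa using cobound_corner_subset G A B he
    · have := cobound_corner_subset G Aᶜ Bᶜ
      rw [compl_compl, cobound_compl, cobound_compl G B] at this
      simpa using this he
  have hsub2 : h1.toFinset ∩ h2.toFinset ⊆ hA.toFinset ∩ hB.toFinset := by
    intro e he
    simp only [Finset.mem_inter, Set.Finite.mem_toFinset,
      Set.Finite.mem_toFinset (hs := hA), Set.Finite.mem_toFinset (hs := hB)] at he ⊢
    exact cobound_corner_inter G A B he
  exact Nat.add_le_add (Finset.sum_le_sum_of_subset hsub1)
    (Finset.sum_le_sum_of_subset hsub2)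

lemma PtIn_mono (G : SimpleGraph V) {A B : Set V} (h : A ⊆ B) :
    ∀ {p}, PtIn G A p → PtIn G B p
  | Sum.inl _, hv => h hv
  | Sum.inr _, ⟨N, hN⟩ => ⟨N, fun n hn => h (hN n hn)⟩

lemma PtIn_inter (G : SimpleGraph V) {A B : Set V} :
    ∀ {p}, PtIn G A p → PtIn G B p → PtIn G (A ∩ B) p
  | Sum.inl _, ha, hb => ⟨ha, hb⟩
  | Sum.inr _, ⟨N, hN⟩, ⟨M, hM⟩ =>
      ⟨max N M, fun n hn => ⟨hN n (le_trans (le_max_left _ _) hn),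
        hM n (le_trans (le_max_right _ _) hn)⟩⟩

lemma ray_settles (G : SimpleGraph V) {B : Set V} (hB : IsCut G B)
    {r : ℕ → V} (hr : IsRay G r) :
    (∃ N, ∀ n ≥ N, r n ∈ B) ∨ (∃ N, ∀ n ≥ N, r n ∈ Bᶜ) := by
  classical
  set S : Set ℕ := {n | s(r n, r (n + 1)) ∈ cobound G B} with hS
  have hfin : S.Finite := by
    apply Set.Finite.of_finite_image (f := fun n => s(r n, r (n + 1)))
    · exact hB.subset (by rintro e ⟨n, hn, rfl⟩; exact hn)
    · intro a ha b hb hab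
      rcases Sym2.eq_iff.mp hab with ⟨h1, h2⟩ | ⟨h1, h2⟩
      · exact hr.inj h1
      · have := hr.inj h1
        have := hr.inj h2
        omega
  obtain ⟨N, hN⟩ := hfin.bddAbove
  have hstep : ∀ n ≥ N + 1, (r n ∈ B ↔ r (n + 1) ∈ B) := by
    intro n hn
    by_contra hne
    have hnS : n ∈ S := by
      have hadj := hr.adj n
      by_cases h : r n ∈ B
      · have h2 : r (n + 1) ∉ B := fun h2 => hne ⟨fun _ => h2, fun _ => h⟩
        exact ⟨G.mem_edgeSet.mpr hadj, r n, r (n + 1), rfl, h, h2⟩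
      · have h2 : r (n + 1) ∈ B := by
          by_contra h2
          exact hne ⟨fun hh => absurd hh h, fun hh => absurd hh h2⟩
        exact ⟨G.mem_edgeSet.mpr hadj, r (n + 1), r n, Sym2.eq_swap, h2, h⟩
    have := hN hnS
    omega
  have hconst : ∀ n ≥ N + 1, (r n ∈ B ↔ r (N + 1) ∈ B) := by
    intro n hn
    obtain ⟨k, rfl⟩ := Nat.exists_eq_add_of_le hn
    clear hn
    induction k with
    | zero => rfl
    | succ k ih =>
        have h1 := hstep (N + 1 + k) (by omega)
        have : N + 1 + (k + 1) = N + 1 + k + 1 := by omega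
        rw [this, ← h1]
        exact ih
  by_cases h : r (N + 1) ∈ B
  · exact Or.inl ⟨N + 1, fun n hn => (hconst n hn).mpr h⟩
  · exact Or.inr ⟨N + 1, fun n hn => fun hh => h ((hconst n hn).mp hh)⟩

lemma PtIn_dichotomy (G : SimpleGraph V) {B : Set V} (hB : IsCut G B) :
    ∀ p, PtIn G B p ∨ PtIn G Bᶜ p
  | Sum.inl v => by
      by_cases h : v ∈ B
      · exact Or.inl h
      · exact Or.inr h
  | Sum.inr r => ray_settles G hB r.2

lemma Separates_symm (G : SimpleGraph V) {A : Set V}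
    {u v : V ⊕ {r : ℕ → V // IsRay G r}} (h : Separates G A u v) :
    Separates G A v u := by
  rcases h with ⟨h1, h2⟩ | ⟨h1, h2⟩
  · exact Or.inr ⟨h2, h1⟩
  · exact Or.inl ⟨h2, h1⟩

lemma Separates_compl (G : SimpleGraph V) {A : Set V}
    {u v : V ⊕ {r : ℕ → V // IsRay G r}} (h : Separates G A u v) :
    Separates G Aᶜ u v := by
  rcases h with ⟨h1, h2⟩ | ⟨h1, h2⟩
  · exact Or.inr ⟨by rw [compl_compl]; exact h1, h2⟩
  · exact Or.inl ⟨h1, by rw [compl_compl]; exact h2⟩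

lemma ThinWrt_symm (G : SimpleGraph V) (c : Sym2 V → ℕ) {A : Set V}
    {u v : V ⊕ {r : ℕ → V // IsRay G r}} (h : ThinWrt G c A u v) :
    ThinWrt G c A v u :=
  ⟨h.1, Separates_symm G h.2.1,
    fun B hB hsep => h.2.2 B hB (Separates_symm G hsep)⟩

lemma ThinWrt_compl (G : SimpleGraph V) (c : Sym2 V → ℕ) {A : Set V}
    {u v : V ⊕ {r : ℕ → V // IsRay G r}} (h : ThinWrt G c A u v) :
    ThinWrt G c Aᶜ u v :=
  ⟨IsCut_compl G h.1, Separates_compl G h.2.1,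
    fun B hB hsep => le_trans (le_of_eq (cap_compl G c A)) (h.2.2 B hB hsep)⟩

lemma IsCut_corner (G : SimpleGraph V) {A B : Set V} (hA : IsCut G A) (hB : IsCut G B) :
    IsCut G (A ∩ Bᶜ) :=
  (hA.union hB).subset (cobound_corner_subset G A B)

lemma IsCut_corner' (G : SimpleGraph V) {A B : Set V} (hA : IsCut G A) (hB : IsCut G B) :
    IsCut G (Aᶜ ∩ B) := by
  have := IsCut_corner G (IsCut_compl G hA) (IsCut_compl G hB)
  rwa [compl_compl] at this

lemma aligned (G : SimpleGraph V) (c : Sym2 V → ℕ) (A B : Set V)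
    (u₁ v₁ u₂ v₂ : V ⊕ {r : ℕ → V // IsRay G r})
    (hA : ThinWrt G c A u₁ v₁) (hB : ThinWrt G c B u₂ v₂)
    (h1 : PtIn G (A ∩ Bᶜ) u₁) (h1' : PtIn G Aᶜ v₁)
    (h2 : PtIn G (Aᶜ ∩ B) u₂) (h2' : PtIn G Bᶜ v₂) :
    Thin G c (A ∩ Bᶜ) ∧ cap G c (A ∩ Bᶜ) = cap G c A ∧
    Thin G c (Aᶜ ∩ B) ∧ cap G c (Aᶜ ∩ B) = cap G c B := by
  have cut1 : IsCut G (A ∩ Bᶜ) := IsCut_corner G hA.1 hB.1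
  have cut2 : IsCut G (Aᶜ ∩ B) := IsCut_corner' G hA.1 hB.1
  have sep1 : Separates G (A ∩ Bᶜ) u₁ v₁ :=
    Or.inl ⟨h1, PtIn_mono G (compl_subset_compl.mpr inter_subset_left) h1'⟩
  have sep2 : Separates G (Aᶜ ∩ B) u₂ v₂ :=
    Or.inl ⟨h2, PtIn_mono G (compl_subset_compl.mpr inter_subset_right) h2'⟩
  have le1 : cap G c A ≤ cap G c (A ∩ Bᶜ) := hA.2.2 _ cut1 sep1
  have le2 : cap G c B ≤ cap G c (Aᶜ ∩ B) := hB.2.2 _ cut2 sep2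
  have hsub := submod G c hA.1 hB.1
  have eq1 : cap G c (A ∩ Bᶜ) = cap G c A := by omega
  have eq2 : cap G c (Aᶜ ∩ B) = cap G c B := by omega
  exact ⟨⟨u₁, v₁, cut1, sep1, fun D hD hsep => eq1 ▸ hA.2.2 D hD hsep⟩, eq1,
    ⟨u₂, v₂, cut2, sep2, fun D hD hsep => eq2 ▸ hB.2.2 D hD hsep⟩, eq2⟩

lemma crossed (G : SimpleGraph V) (c : Sym2 V → ℕ) (A B : Set V)
    (u₁ v₁ u₂ v₂ : V ⊕ {r : ℕ → V // IsRay G r})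
    (hA : ThinWrt G c A u₁ v₁) (hB : ThinWrt G c B u₂ v₂)
    (h1 : PtIn G (A ∩ B) u₁) (h1' : PtIn G (Aᶜ ∩ Bᶜ) v₁)
    (h2 : PtIn G (Aᶜ ∩ B) u₂) (h2' : PtIn G (A ∩ Bᶜ) v₂) :
    Thin G c (A ∩ Bᶜ) ∧ cap G c (A ∩ Bᶜ) = cap G c A ∧
    Thin G c (Aᶜ ∩ B) ∧ cap G c (Aᶜ ∩ B) = cap G c B := by
  have cut1 : IsCut G (A ∩ Bᶜ) := IsCut_corner G hA.1 hB.1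
  have cut2 : IsCut G (Aᶜ ∩ B) := IsCut_corner' G hA.1 hB.1
  have cutD1 : IsCut G (A ∩ B) := by
    have := IsCut_corner G hA.1 (IsCut_compl G hB.1)
    rwa [compl_compl] at this
  have cutD2 : IsCut G (Aᶜ ∩ Bᶜ) := IsCut_corner' G hA.1 (IsCut_compl G hB.1)
  -- C₁ = A ∩ Bᶜ separates u₂ and v₂
  have sep1 : Separates G (A ∩ Bᶜ) u₂ v₂ :=
    Or.inr ⟨PtIn_mono G (compl_subset_compl.mpr inter_subset_left)
      (PtIn_mono G inter_subset_left h2), h2'⟩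
  have sep2 : Separates G (Aᶜ ∩ B) u₂ v₂ :=
    Or.inl ⟨h2, PtIn_mono G (compl_subset_compl.mpr inter_subset_right)
      (PtIn_mono G inter_subset_right h2')⟩
  have sepD1 : Separates G (A ∩ B) u₁ v₁ :=
    Or.inl ⟨h1, PtIn_mono G (compl_subset_compl.mpr inter_subset_left)
      (PtIn_mono G inter_subset_left h1')⟩
  have sepD2 : Separates G (Aᶜ ∩ Bᶜ) u₁ v₁ :=
    Or.inr ⟨PtIn_mono G (show A ⊆ (Aᶜ ∩ Bᶜ)ᶜ from fun x hx hx' => hx'.1 hx)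
      (PtIn_mono G inter_subset_left h1), h1'⟩
  have le1 : cap G c B ≤ cap G c (A ∩ Bᶜ) := hB.2.2 _ cut1 sep1
  have le2 : cap G c B ≤ cap G c (Aᶜ ∩ B) := hB.2.2 _ cut2 sep2
  have leD1 : cap G c A ≤ cap G c (A ∩ B) := hA.2.2 _ cutD1 sepD1
  have leD2 : cap G c A ≤ cap G c (Aᶜ ∩ Bᶜ) := hA.2.2 _ cutD2 sepD2
  have hsub1 := submod G c hA.1 hB.1
  have hsub2 : cap G c (A ∩ B) + cap G c (Aᶜ ∩ Bᶜ) ≤ cap G c A + cap G c B := by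
    have := submod G c hA.1 (IsCut_compl G hB.1)
    rwa [compl_compl, cap_compl] at this
  have hmn : cap G c A = cap G c B := by omega
  have eq1 : cap G c (A ∩ Bᶜ) = cap G c A := by omega
  have eq2 : cap G c (Aᶜ ∩ B) = cap G c B := by omega
  refine ⟨⟨u₂, v₂, cut1, sep1, fun D hD hsep => ?_⟩, eq1,
    ⟨u₂, v₂, cut2, sep2, fun D hD hsep => ?_⟩, eq2⟩
  · rw [eq1, hmn]; exact hB.2.2 D hD hsep
  · rw [eq2]; exact hB.2.2 D hD hsep

lemma main_aux (G : SimpleGraph V) (c : Sym2 V → ℕ) (A B : Set V)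
    (u₁ v₁ u₂ v₂ : V ⊕ {r : ℕ → V // IsRay G r})
    (hA : ThinWrt G c A u₁ v₁) (hB : ThinWrt G c B u₂ v₂)
    (pa : PtIn G A u₁) (pa' : PtIn G Aᶜ v₁)
    (pb : PtIn G B u₂) (pb' : PtIn G Bᶜ v₂) :
    ∃ A' B' : Set V, (A' = A ∨ A' = Aᶜ) ∧ (B' = B ∨ B' = Bᶜ) ∧
      Thin G c (A' ∩ B'ᶜ) ∧ cap G c (A' ∩ B'ᶜ) = cap G c A ∧
      Thin G c (A'ᶜ ∩ B') ∧ cap G c (A'ᶜ ∩ B') = cap G c B := by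
  have hAc : ThinWrt G c Aᶜ v₁ u₁ := ThinWrt_compl G c (ThinWrt_symm G c hA)
  have hBc : ThinWrt G c Bᶜ v₂ u₂ := ThinWrt_compl G c (ThinWrt_symm G c hB)
  rcases PtIn_dichotomy G hA.1 u₂ with hz | hz
  · -- u₂ ∈ A
    rcases PtIn_dichotomy G hB.1 v₁ with hy | hy
    · -- v₁ ∈ B
      rcases PtIn_dichotomy G hA.1 v₂ with hw | hw
      · -- v₂ ∈ A : case C4, A' = Aᶜ, B' = Bᶜ
        obtain ⟨T1, E1, T2, E2⟩ := aligned G c Aᶜ Bᶜ v₁ u₁ v₂ u₂ hAc hBc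
          (PtIn_inter G pa' (by rw [compl_compl]; exact hy))
          (by rw [compl_compl]; exact pa)
          (PtIn_inter G (by rw [compl_compl]; exact hw) pb')
          (by rw [compl_compl]; exact pb)
        rw [cap_compl] at E1
        rw [cap_compl] at E2
        exact ⟨Aᶜ, Bᶜ, Or.inr rfl, Or.inr rfl, T1, E1, T2, E2⟩
      · -- v₂ ∈ Aᶜ
        rcases PtIn_dichotomy G hB.1 u₁ with hx | hx
        · -- u₁ ∈ B : case C2, A' = A, B' = Bᶜ
          obtain ⟨T1, E1, T2, E2⟩ := aligned G c A Bᶜ u₁ v₁ v₂ u₂ hA hBc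
            (PtIn_inter G pa (by rw [compl_compl]; exact hx)) pa'
            (PtIn_inter G hw pb')
            (by rw [compl_compl]; exact pb)
          rw [cap_compl] at E2
          exact ⟨A, Bᶜ, Or.inl rfl, Or.inr rfl, T1, E1, T2, E2⟩
        · -- u₁ ∈ Bᶜ : crossed configuration (with roles of A, B swapped)
          obtain ⟨T1, E1, T2, E2⟩ := crossed G c B A u₂ v₂ u₁ v₁ hB hA
            (PtIn_inter G pb hz) (PtIn_inter G pb' hw)
            (PtIn_inter G hx pa) (PtIn_inter G hy pa')
          rw [Set.inter_comm] at T1 E1 T2 E2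
          exact ⟨A, B, Or.inl rfl, Or.inl rfl, T2, E2, T1, E1⟩
    · -- v₁ ∈ Bᶜ : case C3, A' = Aᶜ, B' = B
      obtain ⟨T1, E1, T2, E2⟩ := aligned G c Aᶜ B v₁ u₁ u₂ v₂ hAc hB
        (PtIn_inter G pa' hy) (by rw [compl_compl]; exact pa)
        (PtIn_inter G (by rw [compl_compl]; exact hz) pb) pb'
      rw [cap_compl] at E1
      exact ⟨Aᶜ, B, Or.inr rfl, Or.inl rfl, T1, E1, T2, E2⟩
  · -- u₂ ∈ Aᶜ
    rcases PtIn_dichotomy G hB.1 u₁ with hx | hx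
    · -- u₁ ∈ B
      rcases PtIn_dichotomy G hA.1 v₂ with hw | hw
      · -- v₂ ∈ A
        rcases PtIn_dichotomy G hB.1 v₁ with hy | hy
        · -- v₁ ∈ B : case C4
          obtain ⟨T1, E1, T2, E2⟩ := aligned G c Aᶜ Bᶜ v₁ u₁ v₂ u₂ hAc hBc
            (PtIn_inter G pa' (by rw [compl_compl]; exact hy))
            (by rw [compl_compl]; exact pa)
            (PtIn_inter G (by rw [compl_compl]; exact hw) pb')
            (by rw [compl_compl]; exact pb)
          rw [cap_compl] at E1
          rw [cap_compl] at E2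
          exact ⟨Aᶜ, Bᶜ, Or.inr rfl, Or.inr rfl, T1, E1, T2, E2⟩
        · -- v₁ ∈ Bᶜ : crossed configuration
          obtain ⟨T1, E1, T2, E2⟩ := crossed G c A B u₁ v₁ u₂ v₂ hA hB
            (PtIn_inter G pa hx) (PtIn_inter G pa' hy)
            (PtIn_inter G hz pb) (PtIn_inter G hw pb')
          exact ⟨A, B, Or.inl rfl, Or.inl rfl, T1, E1, T2, E2⟩
      · -- v₂ ∈ Aᶜ : case C2, A' = A, B' = Bᶜ
        obtain ⟨T1, E1, T2, E2⟩ := aligned G c A Bᶜ u₁ v₁ v₂ u₂ hA hBc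
          (PtIn_inter G pa (by rw [compl_compl]; exact hx)) pa'
          (PtIn_inter G hw pb')
          (by rw [compl_compl]; exact pb)
        rw [cap_compl] at E2
        exact ⟨A, Bᶜ, Or.inl rfl, Or.inr rfl, T1, E1, T2, E2⟩
    · -- u₁ ∈ Bᶜ : case C1, A' = A, B' = B
      obtain ⟨T1, E1, T2, E2⟩ := aligned G c A B u₁ v₁ u₂ v₂ hA hB
        (PtIn_inter G pa hx) pa' (PtIn_inter G hz pb) pb'
      exact ⟨A, B, Or.inl rfl, Or.inl rfl, T1, E1, T2, E2⟩


/-- if `A, B` are crossing thin cuts with capacities `m, n`, then after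
relabelling `A` as `A*` and/or `B` as `B*` if necessary, both `A ∩ B*` and `A* ∩ B` are
thin cuts with capacities `m` and `n` respectively. -/
theorem crossing_thin_corners (G : SimpleGraph V) (hconn : G.Connected)
    (c : Sym2 V → ℕ) (hc : ∀ e ∈ G.edgeSet, 1 ≤ c e)
    (A B : Set V) (m n : ℕ)
    (hA : Thin G c A) (hB : Thin G c B)
    (hm : cap G c A = m) (hn : cap G c B = n)
    (hcross : ¬ Nested A B) :
    ∃ A' B' : Set V, (A' = A ∨ A' = Aᶜ) ∧ (B' = B ∨ B' = Bᶜ) ∧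
      Thin G c (A' ∩ B'ᶜ) ∧ cap G c (A' ∩ B'ᶜ) = m ∧
      Thin G c (A'ᶜ ∩ B') ∧ cap G c (A'ᶜ ∩ B') = n := by
  subst hm
  subst hn
  obtain ⟨u₁, v₁, hA⟩ := hA
  obtain ⟨u₂, v₂, hB⟩ := hB
  obtain ⟨x₁, y₁, hA2, pa, pa'⟩ :
      ∃ x y, ThinWrt G c A x y ∧ PtIn G A x ∧ PtIn G Aᶜ y := by
    rcases hA.2.1 with ⟨h1, h2⟩ | ⟨h1, h2⟩
    · exact ⟨u₁, v₁, hA, h1, h2⟩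
    · exact ⟨v₁, u₁, ThinWrt_symm G c hA, h2, h1⟩
  obtain ⟨x₂, y₂, hB2, pb, pb'⟩ :
      ∃ x y, ThinWrt G c B x y ∧ PtIn G B x ∧ PtIn G Bᶜ y := by
    rcases hB.2.1 with ⟨h1, h2⟩ | ⟨h1, h2⟩
    · exact ⟨u₂, v₂, hB, h1, h2⟩
    · exact ⟨v₂, u₂, ThinWrt_symm G c hB, h2, h1⟩
  exact main_aux G c A B x₁ y₁ x₂ y₂ hA2 hB2 pa pa' pb pb'
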